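/- Let n ≥ 1, let Ω ⊆ ℝⁿ be a bounded domain whose boundary is of class C^{2,α} for some 0 < α < 1, and let τ ≥ 0. If (λ, φ) is a τ-minimal eigenpair for Ω, or a τ-maximal eigenpair for Ω, then the set {x ∈ Ω : ∇φ(x) = 0} has n-dimensional Lebesgue measure zero. -/

import Mathlib

open MeasureTheory Set
open scoped RealInnerProductSpace

noncomputable section

/-- Euclidean space ℝⁿ. -/
abbrev Euc (n : ℕ) := EuclideanSpace ℝ (Fin n)

/-- The Laplacian of a scalar function on ℝⁿ, as the sum of the second
partial derivatives in the coordinate directions. -/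
def lap {n : ℕ} (φ : Euc n → ℝ) (x : Euc n) : ℝ :=
  ∑ i : Fin n,
    iteratedFDeriv ℝ 2 φ x ![EuclideanSpace.single i 1, EuclideanSpace.single i 1]

/-- The unit radial vector field `e_r(x) = x / |x|` (with value `0` at `x = 0`). -/
def eRad {n : ℕ} (x : Euc n) : Euc n := ‖x‖⁻¹ • x

/-- `Ω` is a bounded domain of ℝⁿ whose boundary is of class `C^{2,α}`:
`Ω` is open, connected and bounded, and near each boundary point, `Ω` and its
boundary are the sublevel and level set of a `C²` defining function with
nonvanishing differential whose second derivative is `α`-Hölder continuous. -/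
def IsC2AlphaDomain {n : ℕ} (Ω : Set (Euc n)) (α : ℝ) : Prop :=
  IsOpen Ω ∧ IsConnected Ω ∧ Bornology.IsBounded Ω ∧
  ∀ x ∈ frontier Ω, ∃ (U : Set (Euc n)) (F : Euc n → ℝ),
    IsOpen U ∧ x ∈ U ∧ ContDiffOn ℝ 2 F U ∧
    (∀ y ∈ U, fderivWithin ℝ F U y ≠ 0) ∧
    (U ∩ Ω = U ∩ {y | F y < 0}) ∧
    (U ∩ frontier Ω = U ∩ {y | F y = 0}) ∧
    ∃ C : ℝ, 0 ≤ C ∧ ∀ y ∈ U, ∀ z ∈ U,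
      ‖iteratedFDerivWithin ℝ 2 F U y - iteratedFDerivWithin ℝ 2 F U z‖ ≤ C * ‖y - z‖ ^ α

/-- `(lam, φ)` is a principal eigenpair for `−Δ + v·∇` on `Ω` with Dirichlet
boundary condition: `φ ∈ C¹(cl Ω) ∩ C²(Ω)`, `φ > 0` in `Ω`, `φ = 0` on `∂Ω`,
`sup_Ω φ = 1`, and `−Δφ + v·∇φ = lam φ` almost everywhere in `Ω`. -/
def IsPrincipalEigenpair {n : ℕ} (Ω : Set (Euc n)) (v : Euc n → Euc n)
    (lam : ℝ) (φ : Euc n → ℝ) : Prop :=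
  ContDiffOn ℝ 1 φ (closure Ω) ∧ ContDiffOn ℝ 2 φ Ω ∧
  (∀ x ∈ Ω, 0 < φ x) ∧ (∀ x ∈ frontier Ω, φ x = 0) ∧
  sSup (φ '' Ω) = 1 ∧
  (∀ᵐ x ∂(volume.restrict Ω), -lap φ x + ⟪v x, gradient φ x⟫ = lam * φ x)

/-- `(lam, φ)` is a `τ`-minimal eigenpair for `Ω`: `φ ∈ C²(cl Ω)`, `φ > 0` in `Ω`,
`φ = 0` on `∂Ω`, `sup_Ω φ = 1`, and `−Δφ − τ|∇φ| = lam φ` everywhere in `Ω`. -/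
def IsMinEigenpair {n : ℕ} (Ω : Set (Euc n)) (τ lam : ℝ) (φ : Euc n → ℝ) : Prop :=
  ContDiffOn ℝ 2 φ (closure Ω) ∧
  (∀ x ∈ Ω, 0 < φ x) ∧ (∀ x ∈ frontier Ω, φ x = 0) ∧
  sSup (φ '' Ω) = 1 ∧
  ∀ x ∈ Ω, -lap φ x - τ * ‖gradient φ x‖ = lam * φ x

/-- `(lam, φ)` is a `τ`-maximal eigenpair for `Ω`: `φ ∈ C²(cl Ω)`, `φ > 0` in `Ω`,
`φ = 0` on `∂Ω`, `sup_Ω φ = 1`, and `−Δφ + τ|∇φ| = lam φ` everywhere in `Ω`. -/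
def IsMaxEigenpair {n : ℕ} (Ω : Set (Euc n)) (τ lam : ℝ) (φ : Euc n → ℝ) : Prop :=
  ContDiffOn ℝ 2 φ (closure Ω) ∧
  (∀ x ∈ Ω, 0 < φ x) ∧ (∀ x ∈ frontier Ω, φ x = 0) ∧
  sSup (φ '' Ω) = 1 ∧
  ∀ x ∈ Ω, -lap φ x + τ * ‖gradient φ x‖ = lam * φ x


open Filter Metric
open scoped Topology ENNReal

lemma gradient_eq_zero_iff_fderiv {n : ℕ} (f : Euc n → ℝ) (x : Euc n) :
    gradient f x = 0 ↔ fderiv ℝ f x = 0 := by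
  unfold gradient
  exact LinearIsometryEquiv.map_eq_zero_iff _


section density

variable {n : ℕ} {E : Set (Euc n)} {x : Euc n}

lemma nonempty_near_of_density (hn : 1 ≤ n)
    (hx : Tendsto (fun r => volume (E ∩ closedBall x r) / volume (closedBall x r))
      (𝓝[>] 0) (𝓝 1)) {ε : ℝ} (hε : 0 < ε) (v : Euc n) :
    ∀ᶠ r in 𝓝[>] (0:ℝ), (E ∩ closedBall (x + r • v) (ε * r)).Nonempty := by
  haveI : Nonempty (Fin n) := ⟨⟨0, hn⟩⟩
  haveI : Nontrivial (Euc n) := inferInstance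
  set μ : Measure (Euc n) := volume
  have hK : 0 < ‖v‖ + ε := by positivity
  -- the rescaled density
  have hscale : Tendsto (fun r : ℝ => (‖v‖ + ε) * r) (𝓝[>] 0) (𝓝[>] 0) := by
    rw [tendsto_nhdsWithin_iff]
    constructor
    · have : Tendsto (fun r : ℝ => (‖v‖ + ε) * r) (𝓝 0) (𝓝 ((‖v‖ + ε) * 0)) :=
        (continuous_const.mul continuous_id).tendsto 0
      simpa using this.mono_left nhdsWithin_le_nhds
    · filter_upwards [self_mem_nhdsWithin] with r (hr : 0 < r)
      exact mul_pos hK hr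
  have h2 : Tendsto (fun r : ℝ =>
      μ (E ∩ closedBall x ((‖v‖ + ε) * r)) / μ (closedBall x ((‖v‖ + ε) * r)))
      (𝓝[>] 0) (𝓝 1) := hx.comp hscale
  set q0 : ℝ≥0∞ := ENNReal.ofReal ((ε / (‖v‖ + ε)) ^ n) with hq0def
  have hc' : 0 < (ε / (‖v‖ + ε)) ^ n := by positivity
  have hq0pos : 0 < q0 := by simpa [hq0def] using ENNReal.ofReal_pos.2 hc'
  have hq0le : q0 ≤ 1 := by
    rw [hq0def]
    refine ENNReal.ofReal_le_one.2 ?_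
    refine pow_le_one₀ (by positivity) ?_
    rw [div_le_one hK]; linarith [norm_nonneg v]
  have h3 : 1 - q0 < 1 := ENNReal.sub_lt_self ENNReal.one_ne_top one_ne_zero hq0pos.ne'
  have h4 : ∀ᶠ r in 𝓝[>] (0:ℝ),
      1 - q0 < μ (E ∩ closedBall x ((‖v‖ + ε) * r)) / μ (closedBall x ((‖v‖ + ε) * r)) :=
    h2.eventually (eventually_gt_nhds h3)
  filter_upwards [h4, self_mem_nhdsWithin] with r hr (hrpos : 0 < r)
  by_contra hne
  rw [Set.not_nonempty_iff_eq_empty] at hne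
  set R := (‖v‖ + ε) * r with hR
  have hRpos : 0 < R := mul_pos hK hrpos
  set B := closedBall x R
  set D := ball (x + r • v) (ε * r)
  have hDB : D ⊆ B := by
    intro y hy
    have h1 : dist y (x + r • v) < ε * r := mem_ball.1 hy
    have : dist y x ≤ dist y (x + r • v) + dist (x + r • v) x := dist_triangle _ _ _
    have h2' : dist (x + r • v) x = r * ‖v‖ := by
      simp [dist_eq_norm, norm_smul, abs_of_pos hrpos]
    refine mem_closedBall.2 ?_
    rw [hR]
    nlinarith
  have hED : E ∩ D = ∅ := by
    apply Set.eq_empty_of_subset_empty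
    rw [← hne]
    exact Set.inter_subset_inter_right E ball_subset_closedBall
  -- measures
  have hBfin : μ B ≠ ∞ := (measure_closedBall_lt_top).ne
  have hB0 : μ B ≠ 0 := (measure_closedBall_pos μ x hRpos).ne'
  have hDfin : μ D ≠ ∞ := (measure_ball_lt_top).ne
  -- μ D ≥ q0 * μ B
  have hDval : μ D = ENNReal.ofReal ((ε * r) ^ n) * μ (ball (0:Euc n) 1) := by
    simpa [finrank_euclideanSpace_fin] using
      Measure.addHaar_ball μ (x + r • v) (by positivity : (0:ℝ) ≤ ε * r)
  have hBval : μ B = ENNReal.ofReal (R ^ n) * μ (ball (0:Euc n) 1) := by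
    simpa [finrank_euclideanSpace_fin] using Measure.addHaar_closedBall μ x hRpos.le
  have hq0B : q0 * μ B ≤ μ D := by
    rw [hDval, hBval, ← mul_assoc, ← ENNReal.ofReal_mul hc'.le]
    have : (ε / (‖v‖ + ε)) ^ n * R ^ n = (ε * r) ^ n := by
      rw [← mul_pow]
      congr 1
      field_simp [hR]
      ring
    rw [this]
  -- μ (E ∩ B) + μ D ≤ μ B
  have hsub : E ∩ B ⊆ B \ D := by
    intro y hy
    refine ⟨hy.2, fun hyD => ?_⟩
    have : y ∈ E ∩ D := ⟨hy.1, hyD⟩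
    rw [hED] at this
    exact this
  have hadd : μ (E ∩ B) + μ D ≤ μ B := by
    calc μ (E ∩ B) + μ D ≤ μ (B \ D) + μ D := by
          exact add_le_add_left (measure_mono hsub) _
      _ = μ ((B \ D) ∪ D) := (measure_union (disjoint_sdiff_left) measurableSet_ball).symm
      _ = μ B := by rw [Set.diff_union_of_subset hDB]
  -- from density: (1 - q0) * μ B < μ (E ∩ B)
  have hlt : (1 - q0) * μ B < μ (E ∩ B) := by
    have := hr
    rw [ENNReal.lt_div_iff_mul_lt (Or.inl hB0) (Or.inl hBfin)] at this
    exact this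
  have : μ B < μ B := by
    calc μ B = (1 - q0) * μ B + q0 * μ B := by
          rw [← add_mul, tsub_add_cancel_of_le hq0le, one_mul]
      _ < μ (E ∩ B) + q0 * μ B :=
          ENNReal.add_lt_add_right (ENNReal.mul_ne_top ENNReal.ofReal_ne_top hBfin) hlt
      _ ≤ μ (E ∩ B) + μ D := by gcongr
      _ ≤ μ B := hadd
  exact absurd this (lt_irrefl _)

end density

section density2

variable {n : ℕ} {E : Set (Euc n)} {x : Euc n}

lemma uniqueDiffWithinAt_of_density (hn : 1 ≤ n)
    (hx : Tendsto (fun r => volume (E ∩ closedBall x r) / volume (closedBall x r))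
      (𝓝[>] 0) (𝓝 1)) :
    UniqueDiffWithinAt ℝ E x := by
  have hmem : ∀ δ > (0:ℝ), (E ∩ closedBall x δ).Nonempty := by
    intro δ hδ
    have h1 : ∀ᶠ r in 𝓝[>] (0:ℝ),
        (0:ℝ≥0∞) < volume (E ∩ closedBall x r) / volume (closedBall x r) :=
      hx.eventually (eventually_gt_nhds zero_lt_one)
    have h2 : ∀ᶠ r in 𝓝[>] (0:ℝ), r ≤ δ :=
      eventually_nhdsWithin_of_eventually_nhds
        (Filter.Tendsto.eventually_le_const hδ tendsto_id)
    obtain ⟨r, hr1, hr2⟩ := (h1.and h2).exists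
    have : volume (E ∩ closedBall x r) ≠ 0 := by
      intro h0
      rw [h0, ENNReal.zero_div] at hr1
      exact lt_irrefl _ hr1
    obtain ⟨y, hy⟩ := nonempty_of_measure_ne_zero this
    exact ⟨y, hy.1, closedBall_subset_closedBall hr2 hy.2⟩
  have hclos : x ∈ closure E := by
    rw [Metric.mem_closure_iff]
    intro δ hδ
    obtain ⟨y, hyE, hyB⟩ := hmem (δ/2) (by linarith)
    exact ⟨y, hyE, lt_of_le_of_lt (by simpa [dist_comm] using hyB) (by linarith)⟩
  have htc : ∀ v : Euc n, v ∈ tangentConeAt ℝ E x := by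
    intro v
    have H : ∀ k : ℕ, ∃ r : ℝ, 0 < r ∧ r < 1/((k:ℝ)+1) ∧
        (E ∩ closedBall (x + r • v) (1/((k:ℝ)+1) * r)).Nonempty := by
      intro k
      have hεk : (0:ℝ) < 1/((k:ℝ)+1) := by positivity
      have h1 := nonempty_near_of_density hn hx hεk v
      have h2 : ∀ᶠ r in 𝓝[>] (0:ℝ), r < 1/((k:ℝ)+1) :=
        eventually_nhdsWithin_of_eventually_nhds
          (Filter.Tendsto.eventually_lt_const hεk tendsto_id)
      obtain ⟨r, hr⟩ := (h1.and (h2.and self_mem_nhdsWithin)).exists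
      exact ⟨r, hr.2.2, hr.2.1, hr.1⟩
    choose r hr0 hrlt hne using H
    choose w hw using fun k => (hne k)
    suffices hs : (∀ᶠ k in atTop, x + (w k - x) ∈ E) ∧
        Tendsto (fun k => ‖(r k)⁻¹‖) atTop atTop ∧
        Tendsto (fun k => (r k)⁻¹ • (w k - x)) atTop (𝓝 v) from
      mem_tangentConeAt_of_seq atTop (fun k => (r k)⁻¹) (fun k => w k - x)
        (tangentConeAt.lim_zero atTop hs.2.1 hs.2.2) hs.1 hs.2.2
    refine ⟨?_, ?_, ?_⟩
    · filter_upwards with k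
      simpa using (hw k).1
    · have hb : ∀ k : ℕ, (k:ℝ) + 1 ≤ ‖(r k)⁻¹‖ := by
        intro k
        rw [Real.norm_eq_abs, abs_of_pos (inv_pos.2 (hr0 k)),
          show ((k:ℝ)+1) = (1/((k:ℝ)+1))⁻¹ by rw [one_div, inv_inv]]
        exact inv_anti₀ (hr0 k) (hrlt k).le
      exact tendsto_atTop_mono hb
        (tendsto_atTop_add_const_right _ 1 tendsto_natCast_atTop_atTop)
    · rw [tendsto_iff_norm_sub_tendsto_zero]
      have hbd : ∀ k : ℕ, ‖(r k)⁻¹ • (w k - x) - v‖ ≤ 1/(k+1) := by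
        intro k
        have hrk := hr0 k
        have : (r k)⁻¹ • (w k - x) - v = (r k)⁻¹ • (w k - (x + r k • v)) := by
          rw [smul_sub, smul_sub, smul_add, smul_smul, inv_mul_cancel₀ hrk.ne', one_smul]
          abel
        rw [this, norm_smul, Real.norm_eq_abs, abs_of_pos (inv_pos.2 hrk)]
        have hdist : ‖w k - (x + r k • v)‖ ≤ 1/(k+1) * r k := by
          have := (hw k).2
          rwa [mem_closedBall, dist_eq_norm] at this
        calc (r k)⁻¹ * ‖w k - (x + r k • v)‖ ≤ (r k)⁻¹ * (1/(k+1) * r k) := by gcongr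
          _ = 1/(k+1) := by field_simp
      refine squeeze_zero (fun k => norm_nonneg _) hbd ?_
      exact tendsto_one_div_add_atTop_nhds_zero_nat
  refine ⟨?_, hclos⟩
  have : tangentConeAt ℝ E x = Set.univ := Set.eq_univ_of_forall htc
  rw [this]
  have : (Submodule.span ℝ (Set.univ : Set (Euc n))) = ⊤ := Submodule.span_univ
  rw [this]
  simp [Dense]

end density2


section calc1

variable {n : ℕ}

lemma lap_eq (f : Euc n → ℝ) (x : Euc n) :
    lap f x = ∑ i : Fin n,
      fderiv ℝ (fderiv ℝ f) x (EuclideanSpace.single i 1) (EuclideanSpace.single i 1) := by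
  unfold lap
  congr 1
  ext i
  rw [iteratedFDeriv_two_apply]
  simp

lemma hasDerivAt_comp_line {F : Type*} [NormedAddCommGroup F] [NormedSpace ℝ F]
    {f : Euc n → F} {x v : Euc n} {t : ℝ} (hf : DifferentiableAt ℝ f (x + t • v)) :
    HasDerivAt (fun s : ℝ => f (x + s • v)) (fderiv ℝ f (x + t • v) v) t := by
  have hline : HasDerivAt (fun s : ℝ => x + s • v) v t := by
    simpa using ((hasDerivAt_id t).smul_const v).const_add x
  exact hf.hasFDerivAt.comp_hasDerivAt t hline

lemma hasDerivAt_fderiv_line {f : Euc n → ℝ} {x v : Euc n}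
    (hf : DifferentiableAt ℝ (fderiv ℝ f) x) :
    HasDerivAt (fun s : ℝ => fderiv ℝ f (x + s • v) v)
      (fderiv ℝ (fderiv ℝ f) x v v) 0 := by
  have h0 : DifferentiableAt ℝ (fderiv ℝ f) (x + (0:ℝ) • v) := by simpa using hf
  have h1 : HasDerivAt (fun s : ℝ => fderiv ℝ f (x + s • v))
      (fderiv ℝ (fderiv ℝ f) (x + (0:ℝ) • v) v) 0 := hasDerivAt_comp_line h0
  have h2 := ((ContinuousLinearMap.apply ℝ ℝ v).hasFDerivAt.comp_hasDerivAt 0 h1)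
  simpa [Function.comp_def] using h2

lemma second_deriv_nonpos {f : Euc n → ℝ} {x : Euc n}
    (hf : ∀ᶠ y in 𝓝 x, DifferentiableAt ℝ f y)
    (hf2 : DifferentiableAt ℝ (fderiv ℝ f) x)
    (hmax : IsLocalMax f x) (v : Euc n) :
    fderiv ℝ (fderiv ℝ f) x v v ≤ 0 := by
  by_contra hQ
  push_neg at hQ
  set Q := fderiv ℝ (fderiv ℝ f) x v v with hQdef
  set F₂ : ℝ → ℝ := fun s => fderiv ℝ f (x + s • v) v with hF₂def
  have hD2 : HasDerivAt F₂ Q 0 := hasDerivAt_fderiv_line hf2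
  have hF₂0 : F₂ 0 = 0 := by
    have := hmax.fderiv_eq_zero
    simp [hF₂def, this]
  -- F₂ positive on the right
  have hslope : Tendsto (slope F₂ 0) (𝓝[>] 0) (𝓝 Q) :=
    (hasDerivAt_iff_tendsto_slope.1 hD2).mono_left
      (nhdsWithin_mono 0 (fun t ht => ne_of_gt ht))
  have hpos : ∀ᶠ t in 𝓝[>] (0:ℝ), 0 < F₂ t := by
    filter_upwards [hslope.eventually (eventually_gt_nhds hQ), self_mem_nhdsWithin]
      with t hst (ht : 0 < t)
    have : slope F₂ 0 t = F₂ t / t := by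
      rw [slope_def_field]; simp [hF₂0]
    rw [this] at hst
    have := mul_pos hst ht
    rwa [div_mul_cancel₀ _ ht.ne'] at this
  -- differentiability of the section near 0
  have htend : Tendsto (fun t : ℝ => x + t • v) (𝓝 0) (𝓝 x) := by
    have : Tendsto (fun t : ℝ => x + t • v) (𝓝 0) (𝓝 (x + (0:ℝ) • v)) :=
      (continuous_const.add (continuous_id.smul continuous_const)).tendsto 0
    simpa using this
  have hdiff : ∀ᶠ t in 𝓝 (0:ℝ),
      HasDerivAt (fun s : ℝ => f (x + s • v)) (F₂ t) t := by
    filter_upwards [htend.eventually hf] with t ht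
    exact hasDerivAt_comp_line ht
  have hmax' : ∀ᶠ t in 𝓝 (0:ℝ), f (x + t • v) ≤ f (x + (0:ℝ) • v) := by
    have := htend.eventually hmax
    filter_upwards [this] with t ht
    simpa using ht
  -- get a common interval
  obtain ⟨u, hu, hIoo⟩ := mem_nhdsGT_iff_exists_Ioo_subset.1 hpos
  obtain ⟨δ2, hδ2, hball⟩ := Metric.eventually_nhds_iff.1 (hdiff.and hmax')
  set δ : ℝ := min (u / 2) (δ2 / 2) with hδdef
  have hδpos : 0 < δ := by
    have hu' : (0:ℝ) < u := hu
    simp [hδdef]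
    constructor <;> linarith
  have hδu : δ < u := by
    have hu' : (0:ℝ) < u := hu
    calc δ ≤ u / 2 := min_le_left _ _
      _ < u := by linarith
  have hδδ2 : δ < δ2 := by
    calc δ ≤ δ2 / 2 := min_le_right _ _
      _ < δ2 := by linarith
  have hmem : ∀ t ∈ Icc (0:ℝ) δ, dist t 0 < δ2 := by
    intro t ht
    rw [Real.dist_eq, sub_zero, abs_of_nonneg ht.1]
    exact lt_of_le_of_lt ht.2 hδδ2
  have hcont : ContinuousOn (fun s : ℝ => f (x + s • v)) (Icc 0 δ) := by
    intro t ht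
    exact ((hball (hmem t ht)).1.continuousAt).continuousWithinAt
  have hderiv : ∀ t ∈ interior (Icc (0:ℝ) δ), 0 < deriv (fun s : ℝ => f (x + s • v)) t := by
    intro t ht
    rw [interior_Icc] at ht
    have h1 := (hball (hmem t ⟨ht.1.le, ht.2.le⟩)).1
    rw [h1.deriv]
    exact hIoo ⟨ht.1, lt_trans ht.2 hδu⟩
  have hsm := strictMonoOn_of_deriv_pos (convex_Icc 0 δ) hcont hderiv
  have : f (x + (0:ℝ) • v) < f (x + δ • v) :=
    hsm (left_mem_Icc.2 hδpos.le) (right_mem_Icc.2 hδpos.le) hδpos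
  have h2 := (hball (hmem δ (right_mem_Icc.2 hδpos.le))).2
  linarith

end calc1
section barrier

variable {n : ℕ}

lemma norm_gradient_eq (f : Euc n → ℝ) (x : Euc n) :
    ‖gradient f x‖ = ‖fderiv ℝ f x‖ := by
  unfold gradient
  exact LinearIsometryEquiv.norm_map _ _

lemma norm_proj_le (i0 : Fin n) : ‖(EuclideanSpace.proj i0 : Euc n →L[ℝ] ℝ)‖ ≤ 1 := by
  refine ContinuousLinearMap.opNorm_le_bound _ zero_le_one (fun x => ?_)
  have h1 : x i0 = inner (𝕜 := ℝ) (EuclideanSpace.single i0 (1:ℝ)) x := by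
    rw [EuclideanSpace.inner_single_left]
    simp
  have h2 := abs_real_inner_le_norm (EuclideanSpace.single i0 (1:ℝ)) x
  rw [EuclideanSpace.norm_single] at h2
  simp only [PiLp.proj_apply, Real.norm_eq_abs, one_mul]
  rw [h1]
  simpa using h2

variable (i0 : Fin n) (k : ℝ)

/-- the barrier function -/
def bar (x : Euc n) : ℝ := Real.exp (k * x i0)

lemma bar_pos (x : Euc n) : 0 < bar i0 k x := Real.exp_pos _

lemma bar_contDiff : ContDiff ℝ 2 (bar i0 k) := by
  apply Real.contDiff_exp.comp
  exact (contDiff_const.mul (EuclideanSpace.proj i0 : Euc n →L[ℝ] ℝ).contDiff)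

lemma bar_hasFDerivAt (x : Euc n) :
    HasFDerivAt (bar i0 k)
      ((k * bar i0 k x) • (EuclideanSpace.proj i0 : Euc n →L[ℝ] ℝ)) x := by
  set ℓ : Euc n →L[ℝ] ℝ := EuclideanSpace.proj i0
  have h1 : HasFDerivAt (fun y : Euc n => k * ℓ y) (k • ℓ) x := by
    simpa using (ℓ.hasFDerivAt (x := x)).const_mul k
  have h2 := (Real.hasDerivAt_exp (k * ℓ x)).comp_hasFDerivAt x h1
  have h3 : Real.exp (k * ℓ x) • (k • ℓ) = (k * bar i0 k x) • ℓ := by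
    rw [smul_smul, mul_comm]
    rfl
  rw [h3] at h2
  exact h2

lemma bar_fderiv (x : Euc n) :
    fderiv ℝ (bar i0 k) x = (k * bar i0 k x) • (EuclideanSpace.proj i0 : Euc n →L[ℝ] ℝ) :=
  (bar_hasFDerivAt i0 k x).fderiv

lemma bar_fderiv2 (x : Euc n) :
    fderiv ℝ (fderiv ℝ (bar i0 k)) x =
      ((k * (k * bar i0 k x)) • (EuclideanSpace.proj i0 : Euc n →L[ℝ] ℝ)).smulRight
        (EuclideanSpace.proj i0 : Euc n →L[ℝ] ℝ) := by
  set ℓ : Euc n →L[ℝ] ℝ := EuclideanSpace.proj i0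
  have h0 : (fderiv ℝ (bar i0 k)) = fun y => (k * bar i0 k y) • ℓ := by
    funext y; exact bar_fderiv i0 k y
  have h1 : HasFDerivAt (fun y : Euc n => k * bar i0 k y) ((k * (k * bar i0 k x)) • ℓ) x := by
    have := (bar_hasFDerivAt i0 k x).const_mul k
    rwa [smul_smul] at this
  have h2 : HasFDerivAt (fun y : Euc n => (k * bar i0 k y) • ℓ)
      (((k * (k * bar i0 k x)) • ℓ).smulRight ℓ) x := h1.smul_const ℓ
  rw [h0]
  exact h2.fderiv

lemma bar_lap (x : Euc n) : lap (bar i0 k) x = k^2 * bar i0 k x := by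
  rw [lap_eq]
  have : ∀ i : Fin n,
      fderiv ℝ (fderiv ℝ (bar i0 k)) x (EuclideanSpace.single i 1) (EuclideanSpace.single i 1)
        = k^2 * bar i0 k x * (if i0 = i then 1 else 0) := by
    intro i
    rw [bar_fderiv2]
    simp only [ContinuousLinearMap.smulRight_apply, ContinuousLinearMap.smul_apply,
      PiLp.proj_apply, EuclideanSpace.single_apply, smul_eq_mul]
    by_cases h : i0 = i
    · simp [h]
      ring
    · simp [h]
  rw [Finset.sum_congr rfl (fun i _ => this i)]
  rw [← Finset.mul_sum, Finset.sum_ite_eq Finset.univ i0 (fun _ => (1:ℝ))]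
  simp

end barrier

section lampos

variable {n : ℕ}

lemma lam_pos (hn : 1 ≤ n) {Ω : Set (Euc n)} (hopen : IsOpen Ω) (hne : Ω.Nonempty)
    (hbdd : Bornology.IsBounded Ω) {τ lam : ℝ} (hτ : 0 ≤ τ) {φ : Euc n → ℝ}
    (hφ : ContDiffOn ℝ 2 φ (closure Ω)) (hpos : ∀ x ∈ Ω, 0 < φ x)
    (hbnd : ∀ x ∈ frontier Ω, φ x = 0)
    (heq : ∀ x ∈ Ω, -lam * φ x - τ * ‖gradient φ x‖ ≤ lap φ x) : 0 < lam := by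
  by_contra hlam
  push_neg at hlam
  set i0 : Fin n := ⟨0, hn⟩
  set k : ℝ := τ + 1 with hk
  have hkpos : 0 < k := by positivity
  set g : Euc n → ℝ := bar i0 k with hg
  set ℓ : Euc n →L[ℝ] ℝ := EuclideanSpace.proj i0 with hℓ
  -- compactness
  have hclcomp : IsCompact (closure Ω) :=
    Metric.isCompact_of_isClosed_isBounded isClosed_closure hbdd.closure
  have hclne : (closure Ω).Nonempty := hne.closure
  obtain ⟨xM, hxM, hxMmax⟩ := hclcomp.exists_isMaxOn hclne (bar_contDiff i0 k).continuous.continuousOn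
  set M : ℝ := g xM with hM
  have hMpos : 0 < M := bar_pos i0 k xM
  have hgM : ∀ y ∈ closure Ω, g y ≤ M := fun y hy => hxMmax hy
  -- main estimate
  have key : ∀ ε : ℝ, 0 < ε → ∀ x ∈ Ω, φ x + ε * g x ≤ ε * M := by
    intro ε hε x hx
    set u : Euc n → ℝ := fun y => φ y + ε * g y with hu
    have hucont : ContinuousOn u (closure Ω) :=
      (hφ.continuousOn).add ((continuous_const.mul (bar_contDiff i0 k).continuous).continuousOn)
    obtain ⟨x₀, hx₀cl, hx₀max⟩ := hclcomp.exists_isMaxOn hclne hucont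
    have hx₀notΩ : x₀ ∉ Ω := by
      intro hx₀Ω
      have hnhd : closure Ω ∈ 𝓝 x₀ := mem_of_superset (hopen.mem_nhds hx₀Ω) subset_closure
      have hlocal : IsLocalMax u x₀ := hx₀max.isLocalMax hnhd
      have hφC2 : ContDiffAt ℝ 2 φ x₀ := hφ.contDiffAt hnhd
      have hgC2 : ContDiffAt ℝ 2 (fun y => ε * g y) x₀ :=
        (contDiff_const.mul (bar_contDiff i0 k)).contDiffAt
      have huC2 : ContDiffAt ℝ 2 u x₀ := hφC2.add hgC2
      -- eventual differentiability
      have hud : ∀ᶠ y in 𝓝 x₀, DifferentiableAt ℝ u y := by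
        filter_upwards [huC2.eventually (by norm_num)] with y hy
        exact hy.differentiableAt two_ne_zero
      -- differentiability of fderiv u
      have hu1 : ContDiffAt ℝ 1 (fderiv ℝ u) x₀ := huC2.fderiv_right le_rfl
      have hud2 : DifferentiableAt ℝ (fderiv ℝ u) x₀ := hu1.differentiableAt one_ne_zero
      -- second derivative nonpositive
      have hlapu : lap u x₀ ≤ 0 := by
        rw [lap_eq]
        apply Finset.sum_nonpos
        intro i _
        exact second_deriv_nonpos hud hud2 hlocal _
      -- decompose fderiv u
      have hφd : DifferentiableAt ℝ φ x₀ := hφC2.differentiableAt two_ne_zero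
      have hgd : DifferentiableAt ℝ g x₀ := (bar_contDiff i0 k).differentiable two_ne_zero x₀
      have hgd' : DifferentiableAt ℝ (fun y => ε * g y) x₀ := hgd.const_mul ε
      have hfd_u : fderiv ℝ u x₀ = fderiv ℝ φ x₀ + ε • fderiv ℝ g x₀ := by
        rw [hu]
        rw [fderiv_fun_add hφd hgd', fderiv_const_mul hgd]
      -- critical point of u
      have hcrit : fderiv ℝ u x₀ = 0 := hlocal.fderiv_eq_zero
      have hφgrad : fderiv ℝ φ x₀ = -(ε • fderiv ℝ g x₀) := by
        rw [hfd_u] at hcrit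
        linear_combination (norm := module) hcrit
      have hgradbound : ‖gradient φ x₀‖ ≤ ε * (k * g x₀) := by
        rw [norm_gradient_eq, hφgrad, norm_neg, norm_smul]
        rw [bar_fderiv]
        rw [norm_smul]
        have h1 : ‖(EuclideanSpace.proj i0 : Euc n →L[ℝ] ℝ)‖ ≤ 1 := norm_proj_le i0
        have h2 : ‖k * bar i0 k x₀‖ = k * g x₀ := by
          rw [Real.norm_eq_abs, abs_of_pos (mul_pos hkpos (bar_pos i0 k x₀))]
        rw [h2]
        calc ‖ε‖ * (k * g x₀ * ‖(EuclideanSpace.proj i0 : Euc n →L[ℝ] ℝ)‖)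
            ≤ ‖ε‖ * (k * g x₀ * 1) := by
              gcongr
              exact mul_pos hkpos (bar_pos i0 k x₀) |>.le
          _ = ε * (k * g x₀) := by
              rw [Real.norm_eq_abs, abs_of_pos hε]; ring
      -- laplacian decomposition
      have hφ2d : DifferentiableAt ℝ (fderiv ℝ φ) x₀ :=
        (hφC2.fderiv_right le_rfl).differentiableAt one_ne_zero
      have hg2d : DifferentiableAt ℝ (fderiv ℝ g) x₀ :=
        (((bar_contDiff i0 k).contDiffAt).fderiv_right le_rfl).differentiableAt one_ne_zero
      have hev : fderiv ℝ u =ᶠ[𝓝 x₀] fun y => fderiv ℝ φ y + ε • fderiv ℝ g y := by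
        filter_upwards [hopen.mem_nhds hx₀Ω] with y hy
        have hy' : closure Ω ∈ 𝓝 y := mem_of_superset (hopen.mem_nhds hy) subset_closure
        have hφdy : DifferentiableAt ℝ φ y := (hφ.contDiffAt hy').differentiableAt two_ne_zero
        have hgdy : DifferentiableAt ℝ g y := (bar_contDiff i0 k).differentiable two_ne_zero y
        rw [hu]
        rw [fderiv_fun_add hφdy (hgdy.const_mul ε), fderiv_const_mul hgdy]
      have h2nd : fderiv ℝ (fderiv ℝ u) x₀
          = fderiv ℝ (fderiv ℝ φ) x₀ + ε • fderiv ℝ (fderiv ℝ g) x₀ := by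
        rw [hev.fderiv_eq]
        rw [fderiv_fun_add (g := fun y => ε • fderiv ℝ g y) hφ2d (hg2d.const_smul ε), fderiv_fun_const_smul hg2d]
      have hlapdecomp : lap u x₀ = lap φ x₀ + ε * lap g x₀ := by
        rw [lap_eq, lap_eq, lap_eq, Finset.mul_sum, ← Finset.sum_add_distrib]
        apply Finset.sum_congr rfl
        intro i _
        rw [h2nd]
        simp [smul_eq_mul]
      -- lower bound on lap u
      have hlapφ : -lam * φ x₀ - τ * ‖gradient φ x₀‖ ≤ lap φ x₀ := heq x₀ hx₀Ω
      have hlapg : lap g x₀ = k^2 * g x₀ := bar_lap i0 k x₀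
      have hφpos : 0 < φ x₀ := hpos x₀ hx₀Ω
      have hgpos : 0 < g x₀ := bar_pos i0 k x₀
      have hτbound : τ * ‖gradient φ x₀‖ ≤ τ * (ε * (k * g x₀)) := by
        apply mul_le_mul_of_nonneg_left hgradbound hτ
      have e1 : ε * (k^2 * g x₀) - τ * (ε * (k * g x₀)) = ε * (k * g x₀) := by
        rw [hk]; ring
      have e2 : 0 < ε * (k * g x₀) := mul_pos hε (mul_pos hkpos hgpos)
      have e3 : 0 ≤ -lam * φ x₀ := mul_nonneg (neg_nonneg.2 hlam) hφpos.le
      rw [hlapdecomp, hlapg] at hlapu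
      linarith
    -- so x₀ is on the boundary
    have hx₀fr : x₀ ∈ frontier Ω := by
      rw [hopen.frontier_eq]
      exact ⟨hx₀cl, hx₀notΩ⟩
    have hux₀ : u x₀ = ε * g x₀ := by
      simp [hu, hbnd x₀ hx₀fr]
    have h1 : u x ≤ u x₀ := hx₀max (subset_closure hx)
    have h2 : ε * g x₀ ≤ ε * M := by
      apply mul_le_mul_of_nonneg_left (hgM x₀ hx₀cl) hε.le
    calc φ x + ε * g x = u x := rfl
      _ ≤ u x₀ := h1
      _ = ε * g x₀ := hux₀
      _ ≤ ε * M := h2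
  -- conclude
  obtain ⟨x1, hx1⟩ := hne
  have hφ1 : 0 < φ x1 := hpos x1 hx1
  have hg1 : 0 < g x1 := bar_pos i0 k x1
  set ε : ℝ := φ x1 / (2 * M) with hε
  have hεpos : 0 < ε := by positivity
  have := key ε hεpos x1 hx1
  have hεM : ε * M = φ x1 / 2 := by
    rw [hε]; field_simp
  rw [hεM] at this
  have := mul_pos hεpos hg1
  linarith

end lampos

/-- The critical set of a `τ`-minimal or `τ`-maximal eigenfunction has
Lebesgue measure zero. -/
theorem critical_set_null {n : ℕ} (hn : 1 ≤ n)
    (Ω : Set (Euc n)) (α : ℝ) (hα₀ : 0 < α) (hα₁ : α < 1)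
    (hΩ : IsC2AlphaDomain Ω α) (τ : ℝ) (hτ : 0 ≤ τ)
    (lam : ℝ) (φ : Euc n → ℝ)
    (hpair : IsMinEigenpair Ω τ lam φ ∨ IsMaxEigenpair Ω τ lam φ) :
    volume {x ∈ Ω | gradient φ x = 0} = 0 := by
  obtain ⟨hopen, hconn, hbdd, -⟩ := hΩ
  have hφ : ContDiffOn ℝ 2 φ (closure Ω) := by rcases hpair with h | h <;> exact h.1
  have hpos : ∀ x ∈ Ω, 0 < φ x := by rcases hpair with h | h <;> exact h.2.1
  have hbnd : ∀ x ∈ frontier Ω, φ x = 0 := by rcases hpair with h | h <;> exact h.2.2.1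
  have heq' : ∀ x ∈ Ω, -lam * φ x - τ * ‖gradient φ x‖ ≤ lap φ x := by
    rcases hpair with h | h <;> intro x hx <;> have := h.2.2.2.2 x hx <;>
      nlinarith [mul_nonneg hτ (norm_nonneg (gradient φ x))]
  have hzero : ∀ x ∈ Ω, gradient φ x = 0 → lap φ x = 0 → lam * φ x = 0 := by
    rcases hpair with h | h <;> intro x hx hg hl <;> have := h.2.2.2.2 x hx <;>
      rw [hg, hl] at this <;> simpa using this.symm
  have hlam : 0 < lam :=
    lam_pos hn hopen hconn.nonempty hbdd hτ hφ hpos hbnd heq'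
  set E : Set (Euc n) := {x ∈ Ω | gradient φ x = 0} with hE
  -- measurability of E
  have hcontfd : ContinuousOn (fderiv ℝ φ) Ω :=
    (hφ.mono subset_closure).continuousOn_fderiv_of_isOpen hopen one_le_two
  have hopen2 : IsOpen (Ω ∩ (fderiv ℝ φ) ⁻¹' ({0}ᶜ)) :=
    hcontfd.isOpen_inter_preimage hopen isClosed_singleton.isOpen_compl
  have hEeq : E = Ω \ (Ω ∩ (fderiv ℝ φ) ⁻¹' ({0}ᶜ)) := by
    ext x
    simp only [hE, Set.mem_setOf_eq, Set.mem_diff, Set.mem_inter_iff, Set.mem_preimage,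
      Set.mem_compl_iff, Set.mem_singleton_iff, gradient_eq_zero_iff_fderiv]
    tauto
  have hEmeas : MeasurableSet E := by
    rw [hEeq]
    exact hopen.measurableSet.diff hopen2.measurableSet
  have hae : ∀ᵐ x ∂(volume.restrict E), False := by
    filter_upwards [Besicovitch.ae_tendsto_measure_inter_div volume E,
      ae_restrict_mem hEmeas] with x hdens hxE
    have hxΩ : x ∈ Ω := hxE.1
    have hUD : UniqueDiffWithinAt ℝ E x := uniqueDiffWithinAt_of_density hn hdens
    have hnhd : closure Ω ∈ 𝓝 x := mem_of_superset (hopen.mem_nhds hxΩ) subset_closure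
    have hφC2 : ContDiffAt ℝ 2 φ x := hφ.contDiffAt hnhd
    have hGd : DifferentiableAt ℝ (fderiv ℝ φ) x :=
      (hφC2.fderiv_right (m := 1) le_rfl).differentiableAt one_ne_zero
    have hG0 : ∀ y ∈ E, fderiv ℝ φ y = 0 := fun y hy =>
      (gradient_eq_zero_iff_fderiv φ y).1 hy.2
    have h1 : HasFDerivWithinAt (fderiv ℝ φ) (fderiv ℝ (fderiv ℝ φ) x) E x :=
      hGd.hasFDerivAt.hasFDerivWithinAt
    have h2 : HasFDerivWithinAt (fderiv ℝ φ) (0 : Euc n →L[ℝ] (Euc n →L[ℝ] ℝ)) E x := by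
      have hc : HasFDerivWithinAt (fun _ : Euc n => (0 : Euc n →L[ℝ] ℝ))
          (0 : Euc n →L[ℝ] (Euc n →L[ℝ] ℝ)) E x := hasFDerivWithinAt_const _ _ _
      exact hc.congr (fun y hy => hG0 y hy) (hG0 x hxE)
    have hD2 : fderiv ℝ (fderiv ℝ φ) x = 0 := hUD.eq h1 h2
    have hlap0 : lap φ x = 0 := by
      rw [lap_eq]
      simp [hD2]
    have := hzero x hxΩ hxE.2 hlap0
    have hφx := hpos x hxΩ
    nlinarith
  rw [← Measure.restrict_apply_univ]
  rw [ae_iff] at hae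
  simpa using hae
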